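/- In a CSA group G, if K is a nontrivial normal subgroup with nontrivial centralizer, then K is abelian. -/

import Mathlib

def Malnormal {G : Type*} [Group G] (H : Subgroup G) : Prop :=
  ∀ x : G, x ∉ H → ∀ h ∈ H, x⁻¹ * h * x ∈ H → h = 1

/-- Every element lies in some maximal abelian subgroup. -/
lemma exists_maximal_abelian {G : Type*} [Group G] (c : G) :
    ∃ M : Subgroup G, c ∈ M ∧ Maximal (fun H : Subgroup G => IsMulCommutative H) M := by
  obtain ⟨M, hle, hmax⟩ :=
    zorn_le_nonempty₀ {H : Subgroup G | IsMulCommutative H}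
      (fun s hs hchain y hy => by
        refine ⟨sSup s, ?_, fun z hz => le_sSup hz⟩
        have hdir : DirectedOn (· ≤ ·) s := hchain.directedOn
        constructor
        constructor
        rintro ⟨a, ha⟩ ⟨b, hb⟩
        obtain ⟨H1, hH1, ha1⟩ := (Subgroup.mem_sSup_of_directedOn ⟨y, hy⟩ hdir).1 ha
        obtain ⟨H2, hH2, hb2⟩ := (Subgroup.mem_sSup_of_directedOn ⟨y, hy⟩ hdir).1 hb
        obtain ⟨H3, hH3, h13, h23⟩ := hdir H1 hH1 H2 hH2
        have : IsMulCommutative H3 := hs hH3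
        exact Subtype.ext (H3.mul_comm_of_mem_isMulCommutative (h13 ha1) (h23 hb2)))
      (Subgroup.zpowers c) (Subgroup.zpowers_isMulCommutative c)
  exact ⟨M, hle (Subgroup.mem_zpowers c), hmax⟩

theorem stmt5 {G : Type*} [Group G]
    (hCSA : ∀ M : Subgroup G, Maximal (fun H : Subgroup G => IsMulCommutative H) M → Malnormal M)
    (K : Subgroup G) (hK : K.Normal) (hKbot : K ≠ ⊥)
    (hC : Subgroup.centralizer (K : Set G) ≠ ⊥) :
    ∀ a ∈ K, ∀ b ∈ K, a * b = b * a := by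
  obtain ⟨⟨c, hcC⟩, hc1⟩ := Subgroup.ne_bot_iff_exists_ne_one.1 hC
  obtain ⟨M, hcM, hMmax⟩ := exists_maximal_abelian c
  have hmal := hCSA M hMmax
  have hKM : ∀ a ∈ K, (a : G) ∈ M := by
    intro a ha
    by_contra haM
    refine hc1 (Subtype.ext ?_)
    refine hmal a haM c hcM ?_
    have : (a : G) * c = c * a := Subgroup.mem_centralizer_iff.1 hcC a ha
    have : a⁻¹ * (c : G) * a = c := by
      rw [mul_assoc, ← this, ← mul_assoc, inv_mul_cancel, one_mul]
    rw [this]; exact hcM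
  intro a ha b hb
  have := hMmax.prop
  exact M.mul_comm_of_mem_isMulCommutative (hKM a ha) (hKM b hb)
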